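/- Assume s_h < 2 (equivalently pν < 1) and set α = 1 − s_h/2 ∈ (0,1) and c₀ = p(ν−1)/(pν−1). Then there exist a positive function u : ℝ → ℝ with period 1 and a constant C > 0 such that for every x ∈ X and every λ ∈ (0,1), |R_λ(x,x) − λ^{−α} u(ln λ / ln p) − c₀| ≤ C λ. -/

import Mathlib

noncomputable section
open scoped ENNReal

def HX (ν : ℕ) : Type := {x : ℕ → Fin ν // ∃ N, ∀ n, N ≤ n → (x n : ℕ) = 0}
instance (ν : ℕ) : DecidableEq (HX ν) := Classical.decEq _
abbrev Hl2 (ν : ℕ) : Type := lp (fun _ : HX ν => ℝ) 2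
def cube (ν : ℕ) (r : ℕ) (x : HX ν) : Set (HX ν) := {y | ∀ n, r ≤ n → y.1 n = x.1 n}
def hdelta (ν : ℕ) (x : HX ν) : Hl2 ν := lp.single 2 x 1
def cubeSum (ν r : ℕ) (x : HX ν) (ψ : Hl2 ν) : ℝ := ∑' y : cube ν r x, ψ y
def IsHierLap (ν : ℕ) (p : ℝ) (Δ : Hl2 ν →L[ℝ] Hl2 ν) : Prop :=
  ∀ ψ x, Δ ψ x = ∑' r : ℕ,
    (1 - p) * p ^ r * (((ν : ℝ) ^ (r + 1))⁻¹ * cubeSum ν (r + 1) x ψ - ψ x)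
/-- Spectral dimension `s_h = 2 ln ν / ln(1/p)`. -/
def sh (ν : ℕ) (p : ℝ) : ℝ := 2 * Real.log ν / Real.log (1 / p)
/-- Resolvent kernel `R_λ(x,y) = ⟨(λI − Δ_h)⁻¹ δ_y, δ_x⟩`. -/
def resolvK (ν : ℕ) (Δ : Hl2 ν →L[ℝ] Hl2 ν) (lam : ℝ) (x y : HX ν) : ℝ :=
  @inner ℝ _ _ (Ring.inverse (lam • (1 : Hl2 ν →L[ℝ] Hl2 ν) - Δ) (hdelta ν y)) (hdelta ν x)

set_option linter.unusedSectionVars false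
set_option maxHeartbeats 1000000

namespace HAux
variable {ν : ℕ}

theorem mem_cube {r : ℕ} {x y : HX ν} : y ∈ cube ν r x ↔ ∀ n, r ≤ n → y.1 n = x.1 n :=
  Iff.rfl

theorem mem_cube_self (r : ℕ) (x : HX ν) : x ∈ cube ν r x := fun _ _ => rfl

theorem cube_mono {r s : ℕ} (h : r ≤ s) {x : HX ν} : cube ν r x ⊆ cube ν s x :=
  fun _ hy n hn => hy n (h.trans hn)

theorem cube_eq_of_mem {r : ℕ} {x y : HX ν} (h : y ∈ cube ν r x) :
    cube ν r y = cube ν r x := by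
  ext z
  constructor
  · exact fun hz n hn => (hz n hn).trans (h n hn)
  · exact fun hz n hn => (hz n hn).trans (h n hn).symm

/-- distance-like rank: least `r` with `y ∈ cube ν r x`. -/
def hdist (x y : HX ν) : ℕ := sInf {r | y ∈ cube ν r x}

theorem hdist_set_nonempty (x y : HX ν) : {r | y ∈ cube ν r x}.Nonempty := by
  obtain ⟨N, hN⟩ := x.2
  obtain ⟨M, hM⟩ := y.2
  refine ⟨max N M, fun n hn => ?_⟩
  have h1 : (x.1 n : ℕ) = 0 := hN n (le_trans (le_max_left _ _) hn)
  have h2 : (y.1 n : ℕ) = 0 := hM n (le_trans (le_max_right _ _) hn)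
  exact Fin.val_injective (h2.trans h1.symm)

theorem mem_cube_hdist (x y : HX ν) : y ∈ cube ν (hdist x y) x :=
  Nat.sInf_mem (hdist_set_nonempty x y)

theorem hdist_le {r : ℕ} {x y : HX ν} (h : y ∈ cube ν r x) : hdist x y ≤ r :=
  Nat.sInf_le h

theorem mem_cube_iff_hdist {r : ℕ} {x y : HX ν} : y ∈ cube ν r x ↔ hdist x y ≤ r :=
  ⟨hdist_le, fun h => cube_mono h (mem_cube_hdist x y)⟩

theorem hdist_self (x : HX ν) : hdist x x = 0 :=
  Nat.le_zero.1 (hdist_le (mem_cube_self 0 x))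

theorem hdist_eq_of_mem_small {s : ℕ} {x y z : HX ν} (hs : s < hdist x y)
    (hz : z ∈ cube ν s y) : hdist x z = hdist x y := by
  set d := hdist x y with hd
  have hyd : y ∈ cube ν d x := mem_cube_hdist x y
  have hzd : z ∈ cube ν d x := fun n hn => (hz n (le_trans hs.le hn)).trans (hyd n hn)
  refine le_antisymm (hdist_le hzd) ?_
  by_contra hlt
  push_neg at hlt
  have hzx : z ∈ cube ν (hdist x z) x := mem_cube_hdist x z
  have : y ∈ cube ν (max (hdist x z) s) x := by
    intro n hn
    have h1 : y.1 n = z.1 n := (hz n (le_trans (le_max_right _ _) hn)).symm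
    exact h1.trans (hzx n (le_trans (le_max_left _ _) hn))
  have := hdist_le this
  omega

end HAux

section
variable {ν : ℕ} [NeZero ν]
namespace HAux

def cubeEquiv (r : ℕ) (x : HX ν) : cube ν r x ≃ (Fin r → Fin ν) where
  toFun y i := y.1.1 i
  invFun a := ⟨⟨fun n => if h : n < r then a ⟨n, h⟩ else x.1 n, by
      obtain ⟨N, hN⟩ := x.2
      exact ⟨max N r, fun n hn => by
        simp only [dif_neg (show ¬ n < r by omega)]
        exact hN n (le_trans (le_max_left _ _) hn)⟩⟩,
    fun n hn => dif_neg (by omega)⟩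
  left_inv y := by
    apply Subtype.ext; apply Subtype.ext; funext n
    dsimp only
    split_ifs with h
    · rfl
    · exact (y.2 n (by omega)).symm
  right_inv a := by
    funext i
    simp [i.2]

instance cubeFintype (r : ℕ) (x : HX ν) : Fintype (cube ν r x) :=
  Fintype.ofEquiv _ (cubeEquiv r x).symm

omit [NeZero ν] in
theorem cube_finite (r : ℕ) (x : HX ν) : (cube ν r x).Finite := Set.toFinite _

def cubeFinset (r : ℕ) (x : HX ν) : Finset (HX ν) := (cube_finite r x).toFinset

theorem mem_cubeFinset {r : ℕ} {x y : HX ν} : y ∈ cubeFinset r x ↔ y ∈ cube ν r x :=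
  Set.Finite.mem_toFinset _

theorem cubeFinset_card (r : ℕ) (x : HX ν) : (cubeFinset r x).card = ν ^ r := by
  rw [cubeFinset, Set.Finite.card_toFinset]
  simpa using Fintype.card_congr (cubeEquiv r x)

theorem cubeSum_eq_sum (r : ℕ) (x : HX ν) (ψ : Hl2 ν) :
    cubeSum ν r x ψ = ∑ y ∈ cubeFinset r x, ψ y := by
  rw [cubeSum, ← Finset.tsum_subtype (cubeFinset r x) (fun y => ψ y)]
  apply tsum_congr_set_coe
  exact ((cube_finite r x).coe_toFinset).symm

end HAux
end

section
variable {ν : ℕ} [NeZero ν]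
namespace HAux

theorem cube_zero (x : HX ν) : cube ν 0 x = {x} := by
  ext z
  simp only [Set.mem_singleton_iff, mem_cube]
  constructor
  · intro h; exact Subtype.ext (funext fun n => h n (Nat.zero_le n))
  · rintro rfl; exact fun n _ => rfl

theorem cubeFinset_zero (x : HX ν) : cubeFinset 0 x = {x} := by
  apply Finset.ext
  intro z
  rw [mem_cubeFinset, cube_zero, Finset.mem_singleton, Set.mem_singleton_iff]

theorem cubeFinset_mono {r s : ℕ} (h : r ≤ s) (x : HX ν) :
    cubeFinset r x ⊆ cubeFinset s x := by
  intro z hz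
  rw [mem_cubeFinset] at hz ⊢
  exact cube_mono h hz

theorem sum_shell (x : HX ν) (F : ℕ → ℝ) (s : ℕ) :
    ∑ z ∈ cubeFinset s x, F (hdist x z)
      = F 0 + ∑ e ∈ Finset.Icc 1 s, ((ν : ℝ) ^ e - (ν : ℝ) ^ (e - 1)) * F e := by
  have hν1 : 1 ≤ ν := Nat.one_le_iff_ne_zero.2 (NeZero.ne ν)
  induction s with
  | zero =>
      simp [cubeFinset_zero, hdist_self]
  | succ s ih =>
      have hsub := cubeFinset_mono (Nat.le_succ s) x
      rw [← Finset.sum_sdiff hsub, ih]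
      have hconst : ∀ z ∈ cubeFinset (s + 1) x \ cubeFinset s x,
          F (hdist x z) = F (s + 1) := by
        intro z hz
        rw [Finset.mem_sdiff, mem_cubeFinset, mem_cubeFinset, mem_cube_iff_hdist,
          mem_cube_iff_hdist] at hz
        rw [show hdist x z = s + 1 by omega]
      rw [Finset.sum_congr rfl hconst, Finset.sum_const,
        Finset.card_sdiff_of_subset hsub, cubeFinset_card, cubeFinset_card,
        Finset.sum_Icc_succ_top (Nat.le_add_left 1 s)]
      have hcast : ((ν ^ (s + 1) - ν ^ s : ℕ) : ℝ) = (ν : ℝ) ^ (s + 1) - (ν : ℝ) ^ s := by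
        rw [Nat.cast_sub (Nat.pow_le_pow_right hν1 (Nat.le_succ s))]
        push_cast [pow_succ]; ring
      rw [nsmul_eq_mul, hcast]
      simp only [Nat.add_sub_cancel]
      ring

theorem sum_cube_const {s : ℕ} {x y : HX ν} (hs : s < hdist x y) (F : ℕ → ℝ) :
    ∑ z ∈ cubeFinset s y, F (hdist x z) = (ν : ℝ) ^ s * F (hdist x y) := by
  have hconst : ∀ z ∈ cubeFinset s y, F (hdist x z) = F (hdist x y) := by
    intro z hz
    rw [mem_cubeFinset] at hz
    rw [hdist_eq_of_mem_small hs hz]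
  rw [Finset.sum_congr rfl hconst, Finset.sum_const, cubeFinset_card, nsmul_eq_mul]
  push_cast; ring

theorem cube_eq_of_hdist_le {s : ℕ} {x y : HX ν} (hs : hdist x y ≤ s) :
    cube ν s y = cube ν s x :=
  cube_eq_of_mem (mem_cube_iff_hdist.2 hs)

theorem cubeFinset_eq_of_hdist_le {s : ℕ} {x y : HX ν} (hs : hdist x y ≤ s) :
    cubeFinset s y = cubeFinset s x := by
  apply Finset.ext; intro z
  rw [mem_cubeFinset, mem_cubeFinset, cube_eq_of_hdist_le hs]

end HAux
end

namespace HAux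

/-- resolvent coefficient `c_r = (λ + p^r)⁻¹` -/
def cc (p lam : ℝ) (r : ℕ) : ℝ := (lam + p ^ r)⁻¹

/-- `β_d = (1-1/ν) ∑_{k≥0} c_{d+k} ν^{-(d+k)}` -/
def bet (ν : ℕ) (p lam : ℝ) (d : ℕ) : ℝ :=
  ∑' k : ℕ, (1 - (ν : ℝ)⁻¹) * cc p lam (d + k) * ((ν : ℝ) ^ (d + k))⁻¹

def ff (ν : ℕ) (p lam : ℝ) : ℕ → ℝ
  | 0 => bet ν p lam 0
  | (d + 1) => bet ν p lam (d + 1) - cc p lam d * ((ν : ℝ) ^ (d + 1))⁻¹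

def VV (ν : ℕ) (p lam : ℝ) (s : ℕ) : ℝ :=
  (lam + p ^ s) * bet ν p lam (s + 1) - ((ν : ℝ) ^ (s + 1))⁻¹

def WW (ν : ℕ) (p lam : ℝ) (m : ℕ) : ℝ :=
  ∑' k : ℕ, (1 - p) * p ^ (m + k) * bet ν p lam (m + k + 1)

section Analysis
variable {ν : ℕ} {p lam : ℝ}

theorem denom_pos (hp0 : 0 < p) (hlam : 0 < lam) (r : ℕ) : 0 < lam + p ^ r :=
  add_pos hlam (pow_pos hp0 r)

theorem cc_pos (hp0 : 0 < p) (hlam : 0 < lam) (r : ℕ) : 0 < cc p lam r :=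
  inv_pos.2 (denom_pos hp0 hlam r)

theorem cc_le (hp0 : 0 < p) (hlam : 0 < lam) (r : ℕ) : cc p lam r ≤ lam⁻¹ :=
  inv_anti₀ hlam (le_add_of_nonneg_right (pow_pos hp0 r).le)

theorem cc_mul (hp0 : 0 < p) (hlam : 0 < lam) (r : ℕ) : cc p lam r * (lam + p ^ r) = 1 :=
  inv_mul_cancel₀ (denom_pos hp0 hlam r).ne'

theorem nu_real_pos (hν : 2 ≤ ν) : (0 : ℝ) < ν := by
  have : (2 : ℝ) ≤ (ν : ℝ) := by exact_mod_cast hν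
  linarith

theorem nu_inv_lt_one (hν : 2 ≤ ν) : (ν : ℝ)⁻¹ < 1 := by
  rw [inv_lt_one_iff₀]
  right
  have : (2 : ℝ) ≤ (ν : ℝ) := by exact_mod_cast hν
  linarith

theorem nu_inv_nonneg (hν : 2 ≤ ν) : (0 : ℝ) ≤ (ν : ℝ)⁻¹ :=
  inv_nonneg.2 (nu_real_pos hν).le

theorem one_sub_nu_inv_pos (hν : 2 ≤ ν) : 0 < 1 - (ν : ℝ)⁻¹ := by
  linarith [nu_inv_lt_one hν]

theorem summable_nu_geom (hν : 2 ≤ ν) : Summable (fun k : ℕ => ((ν : ℝ)⁻¹) ^ k) :=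
  summable_geometric_of_lt_one (nu_inv_nonneg hν) (nu_inv_lt_one hν)

theorem bet_term_nonneg (hν : 2 ≤ ν) (hp0 : 0 < p) (hlam : 0 < lam) (d k : ℕ) :
    0 ≤ (1 - (ν : ℝ)⁻¹) * cc p lam (d + k) * ((ν : ℝ) ^ (d + k))⁻¹ := by
  have := cc_pos hp0 hlam (d + k)
  have := one_sub_nu_inv_pos hν
  have : (0:ℝ) < ((ν : ℝ) ^ (d + k))⁻¹ := inv_pos.2 (pow_pos (nu_real_pos hν) _)
  positivity

theorem bet_term_le (hν : 2 ≤ ν) (hp0 : 0 < p) (hlam : 0 < lam) (d k : ℕ) :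
    (1 - (ν : ℝ)⁻¹) * cc p lam (d + k) * ((ν : ℝ) ^ (d + k))⁻¹
      ≤ ((1 - (ν : ℝ)⁻¹) * lam⁻¹ * ((ν : ℝ) ^ d)⁻¹) * ((ν : ℝ)⁻¹) ^ k := by
  have hνp := nu_real_pos hν
  have h1 : ((ν : ℝ) ^ (d + k))⁻¹ = ((ν : ℝ) ^ d)⁻¹ * ((ν : ℝ)⁻¹) ^ k := by
    rw [pow_add, mul_inv, inv_pow]
  rw [h1]
  have h2 : cc p lam (d + k) ≤ lam⁻¹ := cc_le hp0 hlam _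
  have h3 : 0 ≤ (1 - (ν : ℝ)⁻¹) := (one_sub_nu_inv_pos hν).le
  have h4 : (0:ℝ) ≤ ((ν : ℝ) ^ d)⁻¹ * ((ν : ℝ)⁻¹) ^ k := by positivity
  refine le_trans (mul_le_mul_of_nonneg_right (mul_le_mul_of_nonneg_left h2 h3) h4)
    (le_of_eq (by ring))

theorem summable_bet (hν : 2 ≤ ν) (hp0 : 0 < p) (hlam : 0 < lam) (d : ℕ) :
    Summable (fun k : ℕ =>
      (1 - (ν : ℝ)⁻¹) * cc p lam (d + k) * ((ν : ℝ) ^ (d + k))⁻¹) := by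
  refine Summable.of_nonneg_of_le (bet_term_nonneg hν hp0 hlam d)
    (bet_term_le hν hp0 hlam d) ?_
  exact (summable_nu_geom hν).mul_left _

theorem bet_pos (hν : 2 ≤ ν) (hp0 : 0 < p) (hlam : 0 < lam) (d : ℕ) :
    0 < bet ν p lam d := by
  refine Summable.tsum_pos (summable_bet hν hp0 hlam d) (bet_term_nonneg hν hp0 hlam d) 0 ?_
  have := cc_pos hp0 hlam (d + 0)
  have := one_sub_nu_inv_pos hν
  have : (0:ℝ) < ((ν : ℝ) ^ (d + 0))⁻¹ := inv_pos.2 (pow_pos (nu_real_pos hν) _)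
  positivity

theorem bet_le (hν : 2 ≤ ν) (hp0 : 0 < p) (hlam : 0 < lam) (d : ℕ) :
    bet ν p lam d ≤ lam⁻¹ * ((ν : ℝ) ^ d)⁻¹ := by
  have h := Summable.tsum_le_tsum (bet_term_le hν hp0 hlam d)
    (summable_bet hν hp0 hlam d) ((summable_nu_geom hν).mul_left _)
  rw [tsum_mul_left, tsum_geometric_of_lt_one (nu_inv_nonneg hν) (nu_inv_lt_one hν)] at h
  refine h.trans (le_of_eq ?_)
  have h1 : (1 - (ν : ℝ)⁻¹) * (1 - (ν : ℝ)⁻¹)⁻¹ = 1 :=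
    mul_inv_cancel₀ (one_sub_nu_inv_pos hν).ne'
  linear_combination lam⁻¹ * ((ν : ℝ) ^ d)⁻¹ * h1

theorem bet_succ (hν : 2 ≤ ν) (hp0 : 0 < p) (hlam : 0 < lam) (d : ℕ) :
    bet ν p lam d
      = (1 - (ν : ℝ)⁻¹) * cc p lam d * ((ν : ℝ) ^ d)⁻¹ + bet ν p lam (d + 1) := by
  rw [bet, Summable.tsum_eq_zero_add (summable_bet hν hp0 hlam d), add_zero]
  congr 1
  rw [bet]
  exact tsum_congr fun k => by rw [show d + (k + 1) = d + 1 + k by omega]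

theorem ff_abs_le (hν : 2 ≤ ν) (hp0 : 0 < p) (hlam : 0 < lam) (d : ℕ) :
    |ff ν p lam d| ≤ 2 * lam⁻¹ * ((ν : ℝ) ^ d)⁻¹ := by
  have hβp := bet_pos hν hp0 hlam
  have hβl := bet_le hν hp0 hlam
  have hνp := nu_real_pos hν
  have hlinv : (0:ℝ) < lam⁻¹ := inv_pos.2 hlam
  cases d with
  | zero =>
      rw [ff, abs_of_pos (hβp 0)]
      have := hβl 0
      simp only [pow_zero, inv_one, mul_one] at this ⊢
      linarith
  | succ d =>
      rw [ff]
      have h1 := hβp (d + 1)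
      have h2 := hβl (d + 1)
      have h3 := cc_pos hp0 hlam d
      have h4 := cc_le hp0 hlam d
      have h5 : (0:ℝ) < ((ν : ℝ) ^ (d + 1))⁻¹ := inv_pos.2 (pow_pos hνp _)
      rw [abs_le]
      constructor <;> nlinarith

theorem VV_tendsto (hν : 2 ≤ ν) (hp0 : 0 < p) (hp1 : p < 1) (hlam : 0 < lam) :
    Filter.Tendsto (VV ν p lam) Filter.atTop (nhds 0) := by
  have hνp := nu_real_pos hν
  have key : ∀ s : ℕ, ‖VV ν p lam s‖ ≤ ((lam + 1) * lam⁻¹ + 1) * ((ν : ℝ)⁻¹) ^ (s + 1) := by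
    intro s
    have h1 := bet_pos hν hp0 hlam (s + 1)
    have h2 := bet_le hν hp0 hlam (s + 1)
    have hps : 0 < p ^ s := pow_pos hp0 s
    have hps1 : p ^ s ≤ 1 := pow_le_one₀ hp0.le hp1.le
    have hinv : ((ν : ℝ) ^ (s + 1))⁻¹ = ((ν : ℝ)⁻¹) ^ (s + 1) := by rw [inv_pow]
    have h5 : (0:ℝ) < ((ν : ℝ) ^ (s + 1))⁻¹ := inv_pos.2 (pow_pos hνp _)
    have hlinv : (0:ℝ) < lam⁻¹ := inv_pos.2 hlam
    rw [Real.norm_eq_abs, VV, abs_le]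
    constructor <;> rw [← hinv] <;> nlinarith
  refine squeeze_zero_norm key ?_
  have : Filter.Tendsto (fun s : ℕ => ((ν : ℝ)⁻¹) ^ (s+1)) Filter.atTop (nhds 0) := by
    exact (tendsto_pow_atTop_nhds_zero_of_lt_one (nu_inv_nonneg hν)
      (nu_inv_lt_one hν)).comp (Filter.tendsto_add_atTop_nat 1)
  simpa using this.const_mul ((lam + 1) * lam⁻¹ + 1)

theorem VV_diff (hν : 2 ≤ ν) (hp0 : 0 < p) (hlam : 0 < lam) (s : ℕ) :
    (1 - p) * p ^ s * bet ν p lam (s + 1) = VV ν p lam s - VV ν p lam (s + 1) := by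
  have hcc := cc_mul hp0 hlam (s + 1)
  rw [VV, VV, bet_succ hν hp0 hlam (s + 1), pow_succ (ν : ℝ) (s + 1), mul_inv]
  linear_combination (-(1 - (ν : ℝ)⁻¹) * (((ν : ℝ) ^ (s + 1))⁻¹)) * hcc

theorem summable_WW (hν : 2 ≤ ν) (hp0 : 0 < p) (hp1 : p < 1) (hlam : 0 < lam) (m : ℕ) :
    Summable (fun k : ℕ => (1 - p) * p ^ (m + k) * bet ν p lam (m + k + 1)) := by
  refine Summable.of_nonneg_of_le (fun k => ?_) (fun k => ?_)
    ((summable_geometric_of_lt_one hp0.le hp1).mul_left ((1 - p) * p ^ m * lam⁻¹))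
  · exact (mul_pos (mul_pos (by linarith) (pow_pos hp0 _))
      (bet_pos hν hp0 hlam _)).le
  · have h1 := bet_le hν hp0 hlam (m + k + 1)
    have h2 := bet_pos hν hp0 hlam (m + k + 1)
    have h3 : p ^ (m + k) = p ^ m * p ^ k := pow_add p m k
    have h4 : bet ν p lam (m + k + 1) ≤ lam⁻¹ := by
      refine h1.trans ?_
      have hν1 : (1:ℝ) ≤ (ν : ℝ) := by
        have : (2:ℝ) ≤ (ν : ℝ) := by exact_mod_cast hν
        linarith
      have h6 : ((ν : ℝ) ^ (m + k + 1))⁻¹ ≤ 1 := inv_le_one_of_one_le₀ (one_le_pow₀ hν1)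
      have h7 : (0:ℝ) < lam⁻¹ := inv_pos.2 hlam
      nlinarith
    have hfac : (0:ℝ) ≤ (1 - p) * p ^ m * p ^ k := by
      have hm := pow_pos hp0 m
      have hk := pow_pos hp0 k
      have h1p : (0:ℝ) < 1 - p := by linarith
      positivity
    rw [h3]
    refine le_trans (le_of_eq (by ring))
      (le_trans (mul_le_mul_of_nonneg_left h4 hfac) (le_of_eq (by ring)))

theorem WW_eq_VV (hν : 2 ≤ ν) (hp0 : 0 < p) (hp1 : p < 1) (hlam : 0 < lam) (m : ℕ) :
    WW ν p lam m = VV ν p lam m := by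
  rw [WW]
  have hsum : Summable (fun k : ℕ => (1 - p) * p ^ (m + k) * bet ν p lam (m + k + 1)) :=
    summable_WW hν hp0 hp1 hlam m
  have hhs : HasSum (fun k : ℕ => (1 - p) * p ^ (m + k) * bet ν p lam (m + k + 1))
      (VV ν p lam m) := by
    rw [hsum.hasSum_iff_tendsto_nat]
    have hpart : ∀ n : ℕ, ∑ k ∈ Finset.range n, (1 - p) * p ^ (m + k) * bet ν p lam (m + k + 1)
        = VV ν p lam m - VV ν p lam (m + n) := by
      intro n
      induction n with
      | zero => simp
      | succ n ihn =>
          rw [Finset.sum_range_succ, ihn, VV_diff hν hp0 hlam (m + n),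
            show m + (n + 1) = m + n + 1 by omega]
          ring
    simp only [hpart]
    have h0 : Filter.Tendsto (fun n : ℕ => VV ν p lam (n + m)) Filter.atTop (nhds 0) :=
      (VV_tendsto hν hp0 hp1 hlam).comp (Filter.tendsto_add_atTop_nat m)
    have h0' : Filter.Tendsto (fun n : ℕ => VV ν p lam (m + n)) Filter.atTop (nhds 0) := by
      simpa [add_comm] using h0
    simpa using Filter.Tendsto.const_sub (VV ν p lam m) h0'
  exact hhs.tsum_eq

end Analysis
end HAux

namespace HAux
section G
variable {ν : ℕ} [NeZero ν] {p lam : ℝ}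

theorem toReal_two : (2 : ℝ≥0∞).toReal = 2 := by norm_num

theorem norm_rpow_two (a : ℝ) : ‖a‖ ^ (2 : ℝ≥0∞).toReal = a ^ 2 := by
  rw [toReal_two, show (2:ℝ) = ((2:ℕ):ℝ) by norm_num, Real.rpow_natCast,
    Real.norm_eq_abs, sq_abs]

theorem sum_geom_Icc_le (hν : 2 ≤ ν) (s : ℕ) :
    ∑ e ∈ Finset.Icc 1 s, ((ν : ℝ)⁻¹) ^ e ≤ 2 := by
  refine le_trans (Summable.sum_le_tsum _ (fun e _ => pow_nonneg (nu_inv_nonneg hν) e)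
    (summable_nu_geom hν)) ?_
  rw [tsum_geometric_of_lt_one (nu_inv_nonneg hν) (nu_inv_lt_one hν)]
  have h2 : (ν : ℝ)⁻¹ ≤ 2⁻¹ := by
    apply inv_anti₀ (by norm_num)
    exact_mod_cast hν
  have : (2:ℝ)⁻¹ ≤ 1 - (ν : ℝ)⁻¹ := by linarith
  calc (1 - (ν : ℝ)⁻¹)⁻¹ ≤ ((2:ℝ)⁻¹)⁻¹ := inv_anti₀ (by norm_num) this
    _ = 2 := by norm_num

/-- the resolvent's candidate column function -/
def gfun (ν : ℕ) (p lam : ℝ) (x : HX ν) : ∀ _ : HX ν, ℝ :=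
  fun y => ff ν p lam (hdist x y)

theorem ff_sq_le (hν : 2 ≤ ν) (hp0 : 0 < p) (hlam : 0 < lam) (d : ℕ) :
    (ff ν p lam d) ^ 2 ≤ (2 * lam⁻¹ * ((ν : ℝ) ^ d)⁻¹) ^ 2 := by
  rw [← sq_abs]
  exact pow_le_pow_left₀ (abs_nonneg _) (ff_abs_le hν hp0 hlam d) 2

theorem gsum_bound (hν : 2 ≤ ν) (hp0 : 0 < p) (hlam : 0 < lam) (x : HX ν)
    (F : Finset (HX ν)) :
    ∑ y ∈ F, ‖gfun ν p lam x y‖ ^ (2 : ℝ≥0∞).toReal ≤ 12 * (lam⁻¹) ^ 2 := by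
  simp only [norm_rpow_two]
  have hνp := nu_real_pos hν
  set S := F.sup (hdist x) with hS
  have hsub : F ⊆ cubeFinset S x := fun y hy =>
    mem_cubeFinset.2 (mem_cube_iff_hdist.2 (Finset.le_sup hy))
  have h1 : ∑ y ∈ F, (gfun ν p lam x y) ^ 2
      ≤ ∑ y ∈ cubeFinset S x, (gfun ν p lam x y) ^ 2 :=
    Finset.sum_le_sum_of_subset_of_nonneg hsub (fun _ _ _ => sq_nonneg _)
  refine h1.trans ?_
  have h2 : ∑ y ∈ cubeFinset S x, (gfun ν p lam x y) ^ 2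
      = (ff ν p lam 0) ^ 2
        + ∑ e ∈ Finset.Icc 1 S, ((ν : ℝ) ^ e - (ν : ℝ) ^ (e - 1)) * (ff ν p lam e) ^ 2 :=
    sum_shell x (fun d => (ff ν p lam d) ^ 2) S
  rw [h2]
  have hlinv : (0:ℝ) < lam⁻¹ := inv_pos.2 hlam
  have h0 : (ff ν p lam 0) ^ 2 ≤ 4 * (lam⁻¹) ^ 2 := by
    have := ff_sq_le hν hp0 hlam 0
    simp only [pow_zero, inv_one, mul_one] at this
    nlinarith
  have h3 : ∑ e ∈ Finset.Icc 1 S, ((ν : ℝ) ^ e - (ν : ℝ) ^ (e - 1)) * (ff ν p lam e) ^ 2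
      ≤ ∑ e ∈ Finset.Icc 1 S, 4 * (lam⁻¹) ^ 2 * ((ν : ℝ)⁻¹) ^ e := by
    refine Finset.sum_le_sum (fun e _ => ?_)
    have hfe := ff_sq_le hν hp0 hlam e
    have hpe : (0:ℝ) < (ν : ℝ) ^ e := pow_pos hνp e
    have hpe1 : (0:ℝ) ≤ (ν : ℝ) ^ (e - 1) := (pow_pos hνp _).le
    have hkey : (ν : ℝ) ^ e * (2 * lam⁻¹ * ((ν : ℝ) ^ e)⁻¹) ^ 2
        = 4 * (lam⁻¹) ^ 2 * ((ν : ℝ)⁻¹) ^ e := by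
      rw [← inv_pow]
      field_simp
      rw [one_div, mul_right_comm, ← mul_pow, mul_inv_cancel₀ hνp.ne', one_pow, one_mul]
      norm_num
    calc ((ν : ℝ) ^ e - (ν : ℝ) ^ (e - 1)) * (ff ν p lam e) ^ 2
        ≤ (ν : ℝ) ^ e * (ff ν p lam e) ^ 2 := by nlinarith [sq_nonneg (ff ν p lam e)]
      _ ≤ (ν : ℝ) ^ e * (2 * lam⁻¹ * ((ν : ℝ) ^ e)⁻¹) ^ 2 := by nlinarith
      _ = 4 * (lam⁻¹) ^ 2 * ((ν : ℝ)⁻¹) ^ e := hkey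
  have h4 : ∑ e ∈ Finset.Icc 1 S, 4 * (lam⁻¹) ^ 2 * ((ν : ℝ)⁻¹) ^ e
      ≤ 4 * (lam⁻¹) ^ 2 * 2 := by
    rw [← Finset.mul_sum]
    have := sum_geom_Icc_le hν S
    nlinarith
  nlinarith

theorem gfun_memℓp (hν : 2 ≤ ν) (hp0 : 0 < p) (hlam : 0 < lam) (x : HX ν) :
    Memℓp (gfun ν p lam x) 2 :=
  memℓp_gen' (gsum_bound hν hp0 hlam x)

def glp (hν : 2 ≤ ν) (hp0 : 0 < p) (hlam : 0 < lam) (x : HX ν) : Hl2 ν :=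
  ⟨gfun ν p lam x, gfun_memℓp hν hp0 hlam x⟩

theorem glp_apply (hν : 2 ≤ ν) (hp0 : 0 < p) (hlam : 0 < lam) (x y : HX ν) :
    (glp hν hp0 hlam x : ∀ _ : HX ν, ℝ) y = ff ν p lam (hdist x y) := rfl

theorem shell_ff_closed (hν : 2 ≤ ν) (hp0 : 0 < p) (hlam : 0 < lam) (s : ℕ) :
    ff ν p lam 0 + ∑ e ∈ Finset.Icc 1 s, ((ν : ℝ) ^ e - (ν : ℝ) ^ (e - 1)) * ff ν p lam e
      = (ν : ℝ) ^ s * bet ν p lam s := by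
  have hν0 : (ν : ℝ) ≠ 0 := (nu_real_pos hν).ne'
  induction s with
  | zero => simp [ff]
  | succ s ih =>
      rw [Finset.sum_Icc_succ_top (Nat.le_add_left 1 s), ← add_assoc, ih]
      simp only [Nat.add_sub_cancel]
      rw [bet_succ hν hp0 hlam s, show ff ν p lam (s + 1)
        = bet ν p lam (s + 1) - cc p lam s * ((ν : ℝ) ^ (s + 1))⁻¹ from rfl]
      have hne : ((ν : ℝ) ^ s) ≠ 0 := pow_ne_zero _ hν0
      have hne1 : ((ν : ℝ) ^ (s+1)) ≠ 0 := pow_ne_zero _ hν0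
      field_simp
      ring

theorem cubeSum_glp_small (hν : 2 ≤ ν) (hp0 : 0 < p) (hlam : 0 < lam)
    {s : ℕ} {x y : HX ν} (hs : s < hdist x y) :
    cubeSum ν s y (glp hν hp0 hlam x) = (ν : ℝ) ^ s * ff ν p lam (hdist x y) := by
  rw [cubeSum_eq_sum]
  exact sum_cube_const hs (ff ν p lam)

theorem cubeSum_glp_big (hν : 2 ≤ ν) (hp0 : 0 < p) (hlam : 0 < lam)
    {s : ℕ} {x y : HX ν} (hs : hdist x y ≤ s) :
    cubeSum ν s y (glp hν hp0 hlam x) = (ν : ℝ) ^ s * bet ν p lam s := by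
  rw [cubeSum_eq_sum, cubeFinset_eq_of_hdist_le hs]
  rw [show ∑ z ∈ cubeFinset s x, (glp hν hp0 hlam x : ∀ _ : HX ν, ℝ) z
    = ∑ z ∈ cubeFinset s x, ff ν p lam (hdist x z) from rfl]
  rw [sum_shell x (ff ν p lam) s]
  exact shell_ff_closed hν hp0 hlam s

end G
end HAux

namespace HAux
section D
variable {ν : ℕ} [NeZero ν] {p lam : ℝ}

theorem summable_geom_ff (hp0 : 0 < p) (hp1 : p < 1) (m : ℕ) (a : ℝ) :
    Summable (fun k : ℕ => (1 - p) * p ^ (m + k) * a) := by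
  have : (fun k : ℕ => (1 - p) * p ^ (m + k) * a)
      = fun k : ℕ => ((1 - p) * p ^ m * a) * p ^ k := by
    funext k; rw [pow_add]; ring
  rw [this]
  exact (summable_geometric_of_lt_one hp0.le hp1).mul_left _

theorem tsum_geom_ff (hp0 : 0 < p) (hp1 : p < 1) (m : ℕ) (a : ℝ) :
    ∑' k : ℕ, (1 - p) * p ^ (m + k) * a = p ^ m * a := by
  have h1 : (fun k : ℕ => (1 - p) * p ^ (m + k) * a)
      = fun k : ℕ => ((1 - p) * p ^ m * a) * p ^ k := by
    funext k; rw [pow_add]; ring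
  rw [h1, tsum_mul_left, tsum_geometric_of_lt_one hp0.le hp1]
  have hne : (1 : ℝ) - p ≠ 0 := by linarith
  field_simp

theorem delta_glp (hν : 2 ≤ ν) (hp0 : 0 < p) (hp1 : p < 1) (hlam : 0 < lam)
    (Δ : Hl2 ν →L[ℝ] Hl2 ν) (hΔ : IsHierLap ν p Δ) (x y : HX ν) :
    Δ (glp hν hp0 hlam x) y
      = VV ν p lam (hdist x y - 1) - p ^ (hdist x y - 1) * ff ν p lam (hdist x y) := by
  have hνp := nu_real_pos hν
  set d := hdist x y with hd
  set m := d - 1 with hm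
  rw [hΔ (glp hν hp0 hlam x) y]
  have hterm : ∀ r : ℕ, (1 - p) * p ^ r *
        (((ν : ℝ) ^ (r + 1))⁻¹ * cubeSum ν (r + 1) y (glp hν hp0 hlam x)
          - (glp hν hp0 hlam x : ∀ _ : HX ν, ℝ) y)
      = if r < m then 0 else (1 - p) * p ^ r * (bet ν p lam (r + 1) - ff ν p lam d) := by
    intro r
    have hne : ((ν : ℝ) ^ (r + 1)) ≠ 0 := pow_ne_zero _ hνp.ne'
    rw [glp_apply, ← hd]
    split_ifs with h
    · have hlt : r + 1 < d := by omega
      rw [cubeSum_glp_small hν hp0 hlam hlt, ← hd, inv_mul_cancel_left₀ hne, sub_self,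
        mul_zero]
    · have hge : d ≤ r + 1 := by omega
      rw [cubeSum_glp_big hν hp0 hlam hge, inv_mul_cancel_left₀ hne]
  rw [tsum_congr hterm]
  have hinj : Function.Injective (fun k : ℕ => m + k) := fun a b h => by simpa using h
  have hsupp : (Function.support fun r : ℕ => if r < m then (0:ℝ)
        else (1 - p) * p ^ r * (bet ν p lam (r + 1) - ff ν p lam d))
      ⊆ Set.range fun k : ℕ => m + k := by
    intro r hr
    simp only [Function.mem_support] at hr
    by_cases hcase : r < m
    · exact absurd (if_pos hcase) hr
    · exact ⟨r - m, show m + (r - m) = r by omega⟩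
  rw [← Function.Injective.tsum_eq hinj hsupp]
  have hsimp : ∀ k : ℕ, (if m + k < m then (0:ℝ)
        else (1 - p) * p ^ (m + k) * (bet ν p lam (m + k + 1) - ff ν p lam d))
      = (1 - p) * p ^ (m + k) * bet ν p lam (m + k + 1)
        - (1 - p) * p ^ (m + k) * ff ν p lam d := by
    intro k
    rw [if_neg (by omega)]
    ring
  rw [tsum_congr hsimp,
    Summable.tsum_sub (summable_WW hν hp0 hp1 hlam m) (summable_geom_ff hp0 hp1 m _),
    tsum_geom_ff hp0 hp1, ← WW, WW_eq_VV hν hp0 hp1 hlam]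

theorem hdist_eq_zero_iff {x y : HX ν} : hdist x y = 0 ↔ y = x := by
  constructor
  · intro h
    have := mem_cube_hdist x y
    rw [h, cube_zero] at this
    exact this
  · rintro rfl
    exact hdist_self _

theorem Mglp (hν : 2 ≤ ν) (hp0 : 0 < p) (hp1 : p < 1) (hlam : 0 < lam)
    (Δ : Hl2 ν →L[ℝ] Hl2 ν) (hΔ : IsHierLap ν p Δ) (x : HX ν) :
    (lam • (1 : Hl2 ν →L[ℝ] Hl2 ν) - Δ) (glp hν hp0 hlam x) = hdelta ν x := by
  apply lp.ext
  funext y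
  have hcoe : ((lam • (1 : Hl2 ν →L[ℝ] Hl2 ν) - Δ) (glp hν hp0 hlam x)
        : ∀ _ : HX ν, ℝ) y
      = lam * ff ν p lam (hdist x y) - Δ (glp hν hp0 hlam x) y := by
    rw [ContinuousLinearMap.sub_apply, lp.coeFn_sub, Pi.sub_apply,
      ContinuousLinearMap.smul_apply, ContinuousLinearMap.one_apply, lp.coeFn_smul,
      Pi.smul_apply, glp_apply, smul_eq_mul]
  rw [hcoe, delta_glp hν hp0 hp1 hlam Δ hΔ x y]
  have hδ : (hdelta ν x : ∀ _ : HX ν, ℝ) y = if y = x then 1 else 0 := by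
    rw [hdelta, lp.single_apply]
    by_cases h : y = x
    · subst h; simp
    · simp [h]
  rw [hδ]
  by_cases h : y = x
  · have hd0 : hdist x y = 0 := hdist_eq_zero_iff.2 h
    rw [if_pos h, hd0]
    simp only [Nat.zero_sub, pow_zero, one_mul]
    rw [VV, ff, bet_succ hν hp0 hlam 0]
    have hcc0 := cc_mul hp0 hlam 0
    simp only [pow_zero, pow_one, inv_one, mul_one] at hcc0 ⊢
    linear_combination (1 - (ν : ℝ)⁻¹) * hcc0
  · rw [if_neg h]
    have hd : 1 ≤ hdist x y := by
      rcases Nat.eq_zero_or_pos (hdist x y) with h0 | h1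
      · exact absurd (hdist_eq_zero_iff.1 h0) h
      · exact h1
    set m := hdist x y - 1 with hm
    have hdm : hdist x y = m + 1 := by omega
    rw [hdm]
    simp only [Nat.add_sub_cancel]
    rw [VV, show ff ν p lam (m + 1)
      = bet ν p lam (m + 1) - cc p lam m * ((ν : ℝ) ^ (m + 1))⁻¹ from rfl]
    have hccm := cc_mul hp0 hlam m
    linear_combination (-((ν : ℝ) ^ (m + 1))⁻¹) * hccm

end D
end HAux

namespace HAux
section P
variable {ν : ℕ} [NeZero ν]

def proj (r : ℕ) (x : HX ν) : HX ν :=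
  ⟨fun n => if n < r then 0 else x.1 n, by
    obtain ⟨N, hN⟩ := x.2
    refine ⟨max N r, fun n hn => ?_⟩
    simp only [if_neg (show ¬ n < r by omega)]
    exact hN n (le_trans (le_max_left _ _) hn)⟩

theorem proj_mem (r : ℕ) (x : HX ν) : proj r x ∈ cube ν r x :=
  fun n hn => by simp only [proj, if_neg (show ¬ n < r by omega)]

theorem proj_eq_of_mem {r : ℕ} {x y : HX ν} (h : y ∈ cube ν r x) :
    proj r y = proj r x := by
  apply Subtype.ext; funext n
  show (if n < r then 0 else y.1 n) = (if n < r then 0 else x.1 n)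
  split_ifs with hn
  · rfl
  · exact h n (by omega)

def Pval (ν : ℕ) (r : ℕ) (ψ : Hl2 ν) (z : HX ν) : ℝ :=
  ((ν : ℝ) ^ r)⁻¹ * cubeSum ν r z ψ

theorem Pval_congr {r : ℕ} {z w : HX ν} (h : z ∈ cube ν r w) (ψ : Hl2 ν) :
    Pval ν r ψ z = Pval ν r ψ w := by
  rw [Pval, Pval, cubeSum, cubeSum, cube_eq_of_mem h]

theorem Pval_sq_sum_le (hν : 2 ≤ ν) (r : ℕ) (ψ : Hl2 ν) (F : Finset (HX ν)) :
    ∑ z ∈ F, (Pval ν r ψ z) ^ 2 ≤ ‖ψ‖ ^ 2 := by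
  classical
  have hνp := nu_real_pos hν
  set G := F.image (proj r) with hG
  set B := G.biUnion (fun w => cubeFinset r w) with hB
  have hFB : F ⊆ B := by
    intro z hz
    rw [hB, Finset.mem_biUnion]
    refine ⟨proj r z, Finset.mem_image_of_mem _ hz, ?_⟩
    rw [mem_cubeFinset, cube_eq_of_mem (proj_mem r z)]
    exact mem_cube_self r z
  have hdisj : ∀ w₁ ∈ G, ∀ w₂ ∈ G, w₁ ≠ w₂ →
      Disjoint (cubeFinset r w₁) (cubeFinset r w₂) := by
    intro w₁ hw₁ w₂ hw₂ hne
    rw [Finset.disjoint_left]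
    intro z hz1 hz2
    rw [mem_cubeFinset] at hz1 hz2
    obtain ⟨u₁, _, rfl⟩ := Finset.mem_image.1 hw₁
    obtain ⟨u₂, _, rfl⟩ := Finset.mem_image.1 hw₂
    have e1 : proj r z = proj r (proj r u₁) := proj_eq_of_mem hz1
    have e2 : proj r z = proj r (proj r u₂) := proj_eq_of_mem hz2
    have i1 : proj r (proj r u₁) = proj r u₁ := proj_eq_of_mem (proj_mem r u₁)
    have i2 : proj r (proj r u₂) = proj r u₂ := proj_eq_of_mem (proj_mem r u₂)
    exact hne (by rw [← i1, ← e1, e2, i2])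
  have step1 : ∑ z ∈ F, (Pval ν r ψ z) ^ 2 ≤ ∑ z ∈ B, (Pval ν r ψ z) ^ 2 :=
    Finset.sum_le_sum_of_subset_of_nonneg hFB (fun _ _ _ => sq_nonneg _)
  refine step1.trans ?_
  rw [hB, Finset.sum_biUnion hdisj]
  have step2 : ∀ w ∈ G, ∑ z ∈ cubeFinset r w, (Pval ν r ψ z) ^ 2
      ≤ ∑ z ∈ cubeFinset r w, ((ψ : ∀ _ : HX ν, ℝ) z) ^ 2 := by
    intro w _
    have hconst : ∀ z ∈ cubeFinset r w, (Pval ν r ψ z) ^ 2 = (Pval ν r ψ w) ^ 2 := by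
      intro z hz
      rw [Pval_congr (mem_cubeFinset.1 hz) ψ]
    have hcs : cubeSum ν r w ψ = ∑ z ∈ cubeFinset r w, (ψ : ∀ _ : HX ν, ℝ) z :=
      cubeSum_eq_sum r w ψ
    have hCS : (∑ z ∈ cubeFinset r w, (ψ : ∀ _ : HX ν, ℝ) z) ^ 2
        ≤ ((ν : ℝ) ^ r) * ∑ z ∈ cubeFinset r w, ((ψ : ∀ _ : HX ν, ℝ) z) ^ 2 := by
      have h := Finset.sum_mul_sq_le_sq_mul_sq (cubeFinset r w)
        (fun _ => (1:ℝ)) (fun z => (ψ : ∀ _ : HX ν, ℝ) z)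
      simp only [one_pow, one_mul, Finset.sum_const, nsmul_eq_mul, mul_one] at h
      rw [cubeFinset_card] at h
      push_cast at h
      exact h
    rw [Finset.sum_congr rfl hconst, Finset.sum_const, cubeFinset_card, nsmul_eq_mul]
    have hpow : ((ν : ℝ) ^ r) * ((ν : ℝ) ^ r)⁻¹ = 1 :=
      mul_inv_cancel₀ (pow_ne_zero _ hνp.ne')
    have hnn : (0:ℝ) ≤ ((ν : ℝ) ^ r)⁻¹ := (inv_pos.2 (pow_pos hνp r)).le
    rw [Pval, hcs]
    have hcast : ((ν ^ r : ℕ) : ℝ) = (ν : ℝ) ^ r := by push_cast; ring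
    rw [hcast]
    calc (ν : ℝ) ^ r * (((ν : ℝ) ^ r)⁻¹ * ∑ z ∈ cubeFinset r w, (ψ : ∀ _ : HX ν, ℝ) z) ^ 2
        = ((ν : ℝ) ^ r)⁻¹ * ((∑ z ∈ cubeFinset r w, (ψ : ∀ _ : HX ν, ℝ) z) ^ 2
            * (((ν : ℝ) ^ r) * ((ν : ℝ) ^ r)⁻¹)) := by ring
      _ = ((ν : ℝ) ^ r)⁻¹ * (∑ z ∈ cubeFinset r w, (ψ : ∀ _ : HX ν, ℝ) z) ^ 2 := by
          rw [hpow, mul_one]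
      _ ≤ ((ν : ℝ) ^ r)⁻¹ * ((ν : ℝ) ^ r * ∑ z ∈ cubeFinset r w, (ψ : ∀ _ : HX ν, ℝ) z ^ 2) :=
          mul_le_mul_of_nonneg_left hCS hnn
      _ = (((ν : ℝ) ^ r) * ((ν : ℝ) ^ r)⁻¹) * ∑ z ∈ cubeFinset r w, (ψ : ∀ _ : HX ν, ℝ) z ^ 2 := by
          ring
      _ = ∑ z ∈ cubeFinset r w, (ψ : ∀ _ : HX ν, ℝ) z ^ 2 := by
          rw [hpow, one_mul]
  refine (Finset.sum_le_sum step2).trans ?_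
  calc ∑ w ∈ G, ∑ z ∈ cubeFinset r w, (ψ : ∀ _ : HX ν, ℝ) z ^ 2
      = ∑ z ∈ G.biUnion (fun w => cubeFinset r w), (ψ : ∀ _ : HX ν, ℝ) z ^ 2 :=
        (Finset.sum_biUnion hdisj).symm
    _ = ∑ z ∈ G.biUnion (fun w => cubeFinset r w), ‖(ψ : ∀ _ : HX ν, ℝ) z‖ ^ (2:ℝ≥0∞).toReal := by
        refine Finset.sum_congr rfl fun z _ => ?_
        rw [norm_rpow_two]
    _ ≤ ‖ψ‖ ^ (2:ℝ≥0∞).toReal := lp.sum_rpow_le_norm_rpow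
        (by rw [toReal_two]; norm_num) ψ _
    _ = ‖ψ‖ ^ 2 := by
        rw [toReal_two, show (2:ℝ) = ((2:ℕ):ℝ) by norm_num, Real.rpow_natCast]

theorem Pval_memℓp (hν : 2 ≤ ν) (r : ℕ) (ψ : Hl2 ν) : Memℓp (Pval ν r ψ) 2 := by
  refine memℓp_gen' (C := ‖ψ‖ ^ 2) (fun F => ?_)
  have : ∑ z ∈ F, ‖Pval ν r ψ z‖ ^ (2:ℝ≥0∞).toReal = ∑ z ∈ F, (Pval ν r ψ z) ^ 2 :=
    Finset.sum_congr rfl fun z _ => norm_rpow_two _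
  rw [this]
  exact Pval_sq_sum_le hν r ψ F

def Plp (hν : 2 ≤ ν) (r : ℕ) (ψ : Hl2 ν) : Hl2 ν := ⟨Pval ν r ψ, Pval_memℓp hν r ψ⟩

theorem Plp_norm_le (hν : 2 ≤ ν) (r : ℕ) (ψ : Hl2 ν) : ‖Plp hν r ψ‖ ≤ ‖ψ‖ := by
  refine lp.norm_le_of_forall_sum_le (by rw [toReal_two]; norm_num) (norm_nonneg ψ)
    (fun F => ?_)
  have h1 : ∑ z ∈ F, ‖(Plp hν r ψ : ∀ _ : HX ν, ℝ) z‖ ^ (2:ℝ≥0∞).toReal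
      = ∑ z ∈ F, (Pval ν r ψ z) ^ 2 :=
    Finset.sum_congr rfl fun z _ => norm_rpow_two _
  rw [h1, toReal_two, show (2:ℝ) = ((2:ℕ):ℝ) by norm_num, Real.rpow_natCast]
  exact Pval_sq_sum_le hν r ψ F

theorem Plp_apply_abs_le (hν : 2 ≤ ν) (r : ℕ) (ψ : Hl2 ν) (y : HX ν) :
    |Pval ν r ψ y| ≤ ‖ψ‖ := by
  have h1 : ‖(Plp hν r ψ : ∀ _ : HX ν, ℝ) y‖ ≤ ‖Plp hν r ψ‖ :=
    lp.norm_apply_le_norm (by norm_num) (Plp hν r ψ) y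
  rw [show ((Plp hν r ψ : ∀ _ : HX ν, ℝ) y) = Pval ν r ψ y from rfl, Real.norm_eq_abs] at h1
  exact h1.trans (Plp_norm_le hν r ψ)

end P
end HAux

namespace HAux
section U
variable {ν : ℕ} [NeZero ν] {p lam : ℝ}

theorem inner_delta_left (y : HX ν) (f : Hl2 ν) :
    @inner ℝ _ _ (hdelta ν y) f = (f : ∀ _ : HX ν, ℝ) y := by
  rw [hdelta, lp.inner_single_left]
  simp [RCLike.inner_apply]

theorem inner_delta_right (y : HX ν) (f : Hl2 ν) :
    @inner ℝ _ _ f (hdelta ν y) = (f : ∀ _ : HX ν, ℝ) y := by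
  rw [hdelta, lp.inner_single_right]
  simp [RCLike.inner_apply]

theorem abs_apply_le_norm (f : Hl2 ν) (y : HX ν) : |(f : ∀ _ : HX ν, ℝ) y| ≤ ‖f‖ := by
  have := lp.norm_apply_le_norm (E := fun _ : HX ν => ℝ) (p := 2) (by norm_num) f y
  rwa [Real.norm_eq_abs] at this

theorem norm_one_add_delta_apply_le (hν : 2 ≤ ν) (hp0 : 0 < p) (hp1 : p < 1)
    (Δ : Hl2 ν →L[ℝ] Hl2 ν) (hΔ : IsHierLap ν p Δ) (ψ : Hl2 ν) :
    ‖((1 : Hl2 ν →L[ℝ] Hl2 ν) + Δ) ψ‖ ≤ ‖ψ‖ := by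
  have h1p : (0:ℝ) < 1 - p := by linarith
  have hsummand : ∀ r : ℕ, ‖((1 - p) * p ^ r) • Plp hν (r + 1) ψ‖ ≤ (1 - p) * p ^ r * ‖ψ‖ := by
    intro r
    rw [norm_smul, Real.norm_eq_abs, abs_of_pos (mul_pos h1p (pow_pos hp0 r))]
    exact mul_le_mul_of_nonneg_left (Plp_norm_le hν (r + 1) ψ)
      (mul_pos h1p (pow_pos hp0 r)).le
  have hgeom : Summable (fun r : ℕ => (1 - p) * p ^ r * ‖ψ‖) := by
    have := summable_geom_ff hp0 hp1 0 ‖ψ‖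
    refine this.congr fun r => by rw [zero_add]
  have hΦsum : Summable (fun r : ℕ => ((1 - p) * p ^ r) • Plp hν (r + 1) ψ) :=
    Summable.of_norm_bounded hgeom hsummand
  set Φ : Hl2 ν := ∑' r : ℕ, ((1 - p) * p ^ r) • Plp hν (r + 1) ψ with hΦ
  have hcoord : ∀ y : HX ν, (((1 : Hl2 ν →L[ℝ] Hl2 ν) + Δ) ψ : ∀ _ : HX ν, ℝ) y
      = (Φ : ∀ _ : HX ν, ℝ) y := by
    intro y
    have hψy := abs_apply_le_norm ψ y
    have hPsum : Summable (fun r : ℕ => (1 - p) * p ^ r * Pval ν (r + 1) ψ y) := by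
      refine Summable.of_norm_bounded hgeom (fun r => ?_)
      rw [Real.norm_eq_abs, abs_mul, abs_of_pos (mul_pos h1p (pow_pos hp0 r))]
      exact mul_le_mul_of_nonneg_left (Plp_apply_abs_le hν (r + 1) ψ y)
        (mul_pos h1p (pow_pos hp0 r)).le
    have hψsum : Summable (fun r : ℕ => (1 - p) * p ^ r * (ψ : ∀ _ : HX ν, ℝ) y) :=
      (summable_geom_ff hp0 hp1 0 _).congr fun r => by rw [zero_add]
    have hΔy : (Δ ψ : ∀ _ : HX ν, ℝ) y
        = (∑' r : ℕ, (1 - p) * p ^ r * Pval ν (r + 1) ψ y)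
          - (ψ : ∀ _ : HX ν, ℝ) y := by
      rw [hΔ ψ y]
      have : ∀ r : ℕ, (1 - p) * p ^ r *
            (((ν : ℝ) ^ (r + 1))⁻¹ * cubeSum ν (r + 1) y ψ - (ψ : ∀ _ : HX ν, ℝ) y)
          = (1 - p) * p ^ r * Pval ν (r + 1) ψ y
            - (1 - p) * p ^ r * (ψ : ∀ _ : HX ν, ℝ) y := by
        intro r; rw [Pval]; ring
      rw [tsum_congr this, Summable.tsum_sub hPsum hψsum]
      congr 1
      have := tsum_geom_ff hp0 hp1 0 ((ψ : ∀ _ : HX ν, ℝ) y)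
      simp only [zero_add, pow_zero, one_mul] at this
      rw [this]
    have hΦy : (Φ : ∀ _ : HX ν, ℝ) y = ∑' r : ℕ, (1 - p) * p ^ r * Pval ν (r + 1) ψ y := by
      have h1 : (Φ : ∀ _ : HX ν, ℝ) y = @inner ℝ _ _ (hdelta ν y) Φ :=
        (inner_delta_left y Φ).symm
      rw [h1, hΦ]
      rw [show @inner ℝ _ _ (hdelta ν y) (∑' (r : ℕ), ((1 - p) * p ^ r) • Plp hν (r + 1) ψ)
          = (innerSL ℝ (hdelta ν y)) (∑' (r : ℕ), ((1 - p) * p ^ r) • Plp hν (r + 1) ψ)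
          from rfl,
        ContinuousLinearMap.map_tsum (innerSL ℝ (hdelta ν y)) hΦsum]
      refine tsum_congr fun r => ?_
      rw [innerSL_apply_apply, real_inner_smul_right, inner_delta_left]
      rfl
    rw [ContinuousLinearMap.add_apply, ContinuousLinearMap.one_apply, lp.coeFn_add,
      Pi.add_apply, hΔy, hΦy]
    ring
  have heq : ((1 : Hl2 ν →L[ℝ] Hl2 ν) + Δ) ψ = Φ := lp.ext (funext hcoord)
  rw [heq]
  have hnormsum : Summable (fun r : ℕ => ‖((1 - p) * p ^ r) • Plp hν (r + 1) ψ‖) :=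
    Summable.of_nonneg_of_le (fun r => norm_nonneg _) hsummand hgeom
  have h2 : ∑' r : ℕ, (1 - p) * p ^ r * ‖ψ‖ = ‖ψ‖ := by
    have := tsum_geom_ff hp0 hp1 0 ‖ψ‖
    simpa using this
  calc ‖Φ‖ ≤ ∑' r : ℕ, ‖((1 - p) * p ^ r) • Plp hν (r + 1) ψ‖ :=
        norm_tsum_le_tsum_norm hnormsum
    _ ≤ ∑' r : ℕ, (1 - p) * p ^ r * ‖ψ‖ := Summable.tsum_le_tsum hsummand hnormsum hgeom
    _ = ‖ψ‖ := h2

end U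
end HAux

namespace HAux
section V
variable {ν : ℕ} [NeZero ν] {p lam : ℝ}

theorem isUnit_M (hν : 2 ≤ ν) (hp0 : 0 < p) (hp1 : p < 1) (hlam : 0 < lam)
    (Δ : Hl2 ν →L[ℝ] Hl2 ν) (hΔ : IsHierLap ν p Δ) :
    IsUnit (lam • (1 : Hl2 ν →L[ℝ] Hl2 ν) - Δ) := by
  set A : Hl2 ν →L[ℝ] Hl2 ν := 1 + Δ with hA
  have h1lam : (0:ℝ) < 1 + lam := by linarith
  set N : Hl2 ν →L[ℝ] Hl2 ν := (1 + lam)⁻¹ • A with hNdef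
  have hinvpos : (0:ℝ) < (1 + lam)⁻¹ := inv_pos.2 h1lam
  have hNb : ‖N‖ ≤ (1 + lam)⁻¹ := by
    refine ContinuousLinearMap.opNorm_le_bound _ hinvpos.le (fun ψ => ?_)
    rw [hNdef, ContinuousLinearMap.smul_apply, norm_smul, Real.norm_eq_abs,
      abs_of_pos hinvpos]
    have hAψ : ‖A ψ‖ ≤ ‖ψ‖ := by
      rw [hA]; exact norm_one_add_delta_apply_le hν hp0 hp1 Δ hΔ ψ
    exact mul_le_mul_of_nonneg_left hAψ hinvpos.le
  have hN : ‖N‖ < 1 := by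
    refine lt_of_le_of_lt hNb ?_
    rw [inv_lt_one_iff₀]
    right; linarith
  have hunit1 : IsUnit ((1 : Hl2 ν →L[ℝ] Hl2 ν) - N) := by
    exact ⟨Units.oneSub N hN, rfl⟩
  have hsc : IsUnit ((1 + lam) • (1 : Hl2 ν →L[ℝ] Hl2 ν)) := by
    rw [← Algebra.algebraMap_eq_smul_one]
    exact (isUnit_iff_ne_zero.2 h1lam.ne').map (algebraMap ℝ (Hl2 ν →L[ℝ] Hl2 ν))
  have key : lam • (1 : Hl2 ν →L[ℝ] Hl2 ν) - Δ
      = ((1 + lam) • (1 : Hl2 ν →L[ℝ] Hl2 ν)) * ((1 : Hl2 ν →L[ℝ] Hl2 ν) - N) := by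
    rw [hNdef, hA]
    simp only [Algebra.smul_def, mul_one]
    rw [mul_sub, mul_one, ← mul_assoc, ← map_mul, mul_inv_cancel₀ h1lam.ne', map_one,
      one_mul, map_add, map_one]
    abel
  rw [key]
  exact hsc.mul hunit1

theorem resolv_eq (hν : 2 ≤ ν) (hp0 : 0 < p) (hp1 : p < 1) (hlam : 0 < lam)
    (Δ : Hl2 ν →L[ℝ] Hl2 ν) (hΔ : IsHierLap ν p Δ) (x : HX ν) :
    Ring.inverse (lam • (1 : Hl2 ν →L[ℝ] Hl2 ν) - Δ) (hdelta ν x)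
      = glp hν hp0 hlam x := by
  have hu := isUnit_M hν hp0 hp1 hlam Δ hΔ
  have hM := Mglp hν hp0 hp1 hlam Δ hΔ x
  calc Ring.inverse (lam • (1 : Hl2 ν →L[ℝ] Hl2 ν) - Δ) (hdelta ν x)
      = Ring.inverse (lam • (1 : Hl2 ν →L[ℝ] Hl2 ν) - Δ)
          ((lam • (1 : Hl2 ν →L[ℝ] Hl2 ν) - Δ) (glp hν hp0 hlam x)) := by rw [hM]
    _ = (Ring.inverse (lam • (1 : Hl2 ν →L[ℝ] Hl2 ν) - Δ)
          * (lam • (1 : Hl2 ν →L[ℝ] Hl2 ν) - Δ)) (glp hν hp0 hlam x) := rfl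
    _ = (1 : Hl2 ν →L[ℝ] Hl2 ν) (glp hν hp0 hlam x) := by
          rw [Ring.inverse_mul_cancel _ hu]
    _ = glp hν hp0 hlam x := rfl

end V
end HAux

namespace HAux
section PII
variable {ν : ℕ} {p lam : ℝ}

/-- negative-index part of the lattice sum -/
def Gneg (ν : ℕ) (p lam : ℝ) : ℝ :=
  ∑' s : ℕ, (1 - (ν : ℝ)⁻¹) * (ν : ℝ) ^ (s + 1) * (lam + (p ^ (s + 1))⁻¹)⁻¹

def Gfun (ν : ℕ) (p lam : ℝ) : ℝ := bet ν p lam 0 + Gneg ν p lam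

theorem Gneg_term_pos (hν : 2 ≤ ν) (hp0 : 0 < p) (hlam : 0 < lam) (s : ℕ) :
    0 < (1 - (ν : ℝ)⁻¹) * (ν : ℝ) ^ (s + 1) * (lam + (p ^ (s + 1))⁻¹)⁻¹ := by
  have h1 := one_sub_nu_inv_pos hν
  have h2 : (0:ℝ) < (ν : ℝ) ^ (s + 1) := pow_pos (nu_real_pos hν) _
  have h3 : (0:ℝ) < lam + (p ^ (s + 1))⁻¹ :=
    add_pos hlam (inv_pos.2 (pow_pos hp0 _))
  positivity

theorem Gneg_term_le (hν : 2 ≤ ν) (hp0 : 0 < p) (hlam : 0 < lam) (s : ℕ) :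
    (1 - (ν : ℝ)⁻¹) * (ν : ℝ) ^ (s + 1) * (lam + (p ^ (s + 1))⁻¹)⁻¹
      ≤ (1 - (ν : ℝ)⁻¹) * ((ν : ℝ) * p) ^ (s + 1) := by
  have h1 := (one_sub_nu_inv_pos hν).le
  have h2 : (0:ℝ) < (ν : ℝ) ^ (s + 1) := pow_pos (nu_real_pos hν) _
  have hq : (0:ℝ) < (p ^ (s + 1))⁻¹ := inv_pos.2 (pow_pos hp0 _)
  have h3 : (lam + (p ^ (s + 1))⁻¹)⁻¹ ≤ ((p ^ (s + 1))⁻¹)⁻¹ :=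
    inv_anti₀ hq (le_add_of_nonneg_left hlam.le)
  rw [inv_inv] at h3
  have h4 : (1 - (ν : ℝ)⁻¹) * (ν : ℝ) ^ (s + 1) * (lam + (p ^ (s + 1))⁻¹)⁻¹
      ≤ (1 - (ν : ℝ)⁻¹) * (ν : ℝ) ^ (s + 1) * p ^ (s + 1) := by
    have hnn : (0:ℝ) ≤ (1 - (ν : ℝ)⁻¹) * (ν : ℝ) ^ (s + 1) := by positivity
    exact mul_le_mul_of_nonneg_left h3 hnn
  refine h4.trans (le_of_eq ?_)
  rw [mul_pow]
  ring

theorem summable_Gneg_geo (hν : 2 ≤ ν) (hp0 : 0 < p) (hνp1 : (ν : ℝ) * p < 1) :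
    Summable (fun s : ℕ => (1 - (ν : ℝ)⁻¹) * ((ν : ℝ) * p) ^ (s + 1)) := by
  have hnn : (0:ℝ) ≤ (ν : ℝ) * p := by positivity
  have hc : ∀ s : ℕ, (1 - (ν : ℝ)⁻¹) * ((ν : ℝ) * p) ^ (s + 1)
      = ((1 - (ν : ℝ)⁻¹) * ((ν : ℝ) * p)) * ((ν : ℝ) * p) ^ s := by
    intro s; rw [pow_succ]; ring
  exact Summable.congr ((summable_geometric_of_lt_one hnn hνp1).mul_left _)
    (fun s => (hc s).symm)

theorem summable_Gneg (hν : 2 ≤ ν) (hp0 : 0 < p) (hνp1 : (ν : ℝ) * p < 1) (hlam : 0 < lam) :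
    Summable (fun s : ℕ =>
      (1 - (ν : ℝ)⁻¹) * (ν : ℝ) ^ (s + 1) * (lam + (p ^ (s + 1))⁻¹)⁻¹) :=
  Summable.of_nonneg_of_le (fun s => (Gneg_term_pos hν hp0 hlam s).le)
    (Gneg_term_le hν hp0 hlam) (summable_Gneg_geo hν hp0 hνp1)

theorem Gneg_nonneg (hν : 2 ≤ ν) (hp0 : 0 < p) (hlam : 0 < lam) : 0 ≤ Gneg ν p lam :=
  tsum_nonneg (fun s => (Gneg_term_pos hν hp0 hlam s).le)

theorem Gfun_pos (hν : 2 ≤ ν) (hp0 : 0 < p) (hlam : 0 < lam) : 0 < Gfun ν p lam :=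
  add_pos_of_pos_of_nonneg (bet_pos hν hp0 hlam 0) (Gneg_nonneg hν hp0 hlam)

theorem tsum_geo_succ (hν : 2 ≤ ν) (hp0 : 0 < p) (hνp1 : (ν : ℝ) * p < 1) :
    ∑' s : ℕ, (1 - (ν : ℝ)⁻¹) * ((ν : ℝ) * p) ^ (s + 1)
      = p * ((ν : ℝ) - 1) / (1 - p * (ν : ℝ)) := by
  have hnn : (0:ℝ) ≤ (ν : ℝ) * p := by positivity
  have hcongr : ∀ s : ℕ, (1 - (ν : ℝ)⁻¹) * ((ν : ℝ) * p) ^ (s + 1)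
      = ((1 - (ν : ℝ)⁻¹) * ((ν : ℝ) * p)) * ((ν : ℝ) * p) ^ s := by
    intro s; rw [pow_succ]; ring
  rw [tsum_congr hcongr, tsum_mul_left, tsum_geometric_of_lt_one hnn hνp1]
  have hν0 : (ν : ℝ) ≠ 0 := (nu_real_pos hν).ne'
  have hd : 1 - (ν : ℝ) * p ≠ 0 := by intro h; nlinarith
  have hd' : 1 - p * (ν : ℝ) ≠ 0 := by intro h; nlinarith
  field_simp

theorem Gneg_close (hν : 2 ≤ ν) (hp0 : 0 < p) (hp1 : p < 1) (hνp1 : (ν : ℝ) * p < 1)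
    (hlam : 0 < lam) :
    |Gneg ν p lam - p * ((ν : ℝ) - 1) / (1 - p * (ν : ℝ))|
      ≤ ((1 - (ν : ℝ)⁻¹) * ((ν : ℝ) * p ^ 2) / (1 - (ν : ℝ) * p ^ 2)) * lam := by
  have hνp := nu_real_pos hν
  have hνp2 : (ν : ℝ) * p ^ 2 < 1 := by nlinarith
  have hνp2nn : (0:ℝ) ≤ (ν : ℝ) * p ^ 2 := by positivity
  have hsg := summable_Gneg_geo hν hp0 hνp1
  have hst := summable_Gneg hν hp0 hνp1 hlam
  have hbound : ∀ s : ℕ,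
      (1 - (ν : ℝ)⁻¹) * ((ν : ℝ) * p) ^ (s + 1)
        - (1 - (ν : ℝ)⁻¹) * (ν : ℝ) ^ (s + 1) * (lam + (p ^ (s + 1))⁻¹)⁻¹
      ≤ lam * ((1 - (ν : ℝ)⁻¹) * ((ν : ℝ) * p ^ 2) ^ (s + 1)) := by
    intro s
    have hq : (0:ℝ) < (p ^ (s + 1))⁻¹ := inv_pos.2 (pow_pos hp0 _)
    have hlq : (0:ℝ) < lam + (p ^ (s + 1))⁻¹ := add_pos hlam hq
    have hqi : p ^ (s + 1) * (p ^ (s + 1))⁻¹ = 1 := mul_inv_cancel₀ (pow_pos hp0 _).ne'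
    have hli : (lam + (p ^ (s + 1))⁻¹) * (lam + (p ^ (s + 1))⁻¹)⁻¹ = 1 :=
      mul_inv_cancel₀ hlq.ne'
    have hkey : p ^ (s + 1) - (lam + (p ^ (s + 1))⁻¹)⁻¹
        = lam * p ^ (s + 1) * (lam + (p ^ (s + 1))⁻¹)⁻¹ := by
      linear_combination (-(p ^ (s + 1))) * hli + (lam + (p ^ (s + 1))⁻¹)⁻¹ * hqi
    have hIleP : (lam + (p ^ (s + 1))⁻¹)⁻¹ ≤ p ^ (s + 1) := by
      have := inv_anti₀ hq (le_add_of_nonneg_left hlam.le)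
      rwa [inv_inv] at this
    have hIpos : (0:ℝ) < (lam + (p ^ (s + 1))⁻¹)⁻¹ := inv_pos.2 hlq
    have hstep : (1 - (ν : ℝ)⁻¹) * ((ν : ℝ) * p) ^ (s + 1)
          - (1 - (ν : ℝ)⁻¹) * (ν : ℝ) ^ (s + 1) * (lam + (p ^ (s + 1))⁻¹)⁻¹
        = (1 - (ν : ℝ)⁻¹) * (ν : ℝ) ^ (s + 1)
            * (lam * p ^ (s + 1) * (lam + (p ^ (s + 1))⁻¹)⁻¹) := by
      rw [mul_pow, ← hkey]
      ring
    rw [hstep]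
    have hc : (0:ℝ) ≤ (1 - (ν : ℝ)⁻¹) * (ν : ℝ) ^ (s + 1) := by
      have := (one_sub_nu_inv_pos hν).le
      positivity
    have hfin : lam * p ^ (s + 1) * (lam + (p ^ (s + 1))⁻¹)⁻¹
        ≤ lam * p ^ (s + 1) * p ^ (s + 1) := by
      have : (0:ℝ) ≤ lam * p ^ (s + 1) := by positivity
      exact mul_le_mul_of_nonneg_left hIleP this
    refine (mul_le_mul_of_nonneg_left hfin hc).trans (le_of_eq ?_)
    rw [mul_pow, pow_two]
    ring
  have hle : Gneg ν p lam ≤ ∑' s : ℕ, (1 - (ν : ℝ)⁻¹) * ((ν : ℝ) * p) ^ (s + 1) :=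
    Summable.tsum_le_tsum (fun s => Gneg_term_le hν hp0 hlam s) hst hsg
  have habs : |Gneg ν p lam - p * ((ν : ℝ) - 1) / (1 - p * (ν : ℝ))|
      = (∑' s : ℕ, (1 - (ν : ℝ)⁻¹) * ((ν : ℝ) * p) ^ (s + 1)) - Gneg ν p lam := by
    rw [← tsum_geo_succ hν hp0 hνp1, abs_sub_comm, abs_of_nonneg (by linarith)]
  rw [habs]
  have hdiff : (∑' s : ℕ, (1 - (ν : ℝ)⁻¹) * ((ν : ℝ) * p) ^ (s + 1)) - Gneg ν p lam
      = ∑' s : ℕ, ((1 - (ν : ℝ)⁻¹) * ((ν : ℝ) * p) ^ (s + 1)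
          - (1 - (ν : ℝ)⁻¹) * (ν : ℝ) ^ (s + 1) * (lam + (p ^ (s + 1))⁻¹)⁻¹) :=
    (Summable.tsum_sub hsg hst).symm
  rw [hdiff]
  have hsum_bound : Summable (fun s : ℕ =>
      lam * ((1 - (ν : ℝ)⁻¹) * ((ν : ℝ) * p ^ 2) ^ (s + 1))) := by
    have hc : ∀ s : ℕ, lam * ((1 - (ν : ℝ)⁻¹) * ((ν : ℝ) * p ^ 2) ^ (s + 1))
        = (lam * (1 - (ν : ℝ)⁻¹) * ((ν : ℝ) * p ^ 2)) * ((ν : ℝ) * p ^ 2) ^ s := by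
      intro s; rw [pow_succ]; ring
    exact Summable.congr ((summable_geometric_of_lt_one hνp2nn hνp2).mul_left _)
      (fun s => (hc s).symm)
  refine (Summable.tsum_le_tsum hbound (hsg.sub hst) hsum_bound).trans ?_
  have hc : ∀ s : ℕ, lam * ((1 - (ν : ℝ)⁻¹) * ((ν : ℝ) * p ^ 2) ^ (s + 1))
      = (lam * (1 - (ν : ℝ)⁻¹) * ((ν : ℝ) * p ^ 2)) * ((ν : ℝ) * p ^ 2) ^ s := by
    intro s; rw [pow_succ]; ring
  rw [tsum_congr hc, tsum_mul_left, tsum_geometric_of_lt_one hνp2nn hνp2]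
  rw [div_mul_eq_mul_div, div_eq_mul_inv]
  ring_nf
  exact le_rfl


end PII
end HAux

namespace HAux
section SC
variable {ν : ℕ} {p lam : ℝ}

theorem bet0_scale (hν : 2 ≤ ν) (hp0 : 0 < p) (hlam : 0 < lam) :
    bet ν p (p * lam) 0
      = ((ν : ℝ) * p)⁻¹ * (bet ν p lam 0
          + (1 - (ν : ℝ)⁻¹) * (ν : ℝ) * (lam + p⁻¹)⁻¹) := by
  have hplam : 0 < p * lam := mul_pos hp0 hlam
  have hν0 : (ν : ℝ) ≠ 0 := (nu_real_pos hν).ne'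
  have hp0' : p ≠ 0 := hp0.ne'
  rw [show bet ν p (p * lam) 0 = ∑' k : ℕ,
      (1 - (ν : ℝ)⁻¹) * cc p (p * lam) (0 + k) * ((ν : ℝ) ^ (0 + k))⁻¹ from rfl,
    Summable.tsum_eq_zero_add (summable_bet hν hp0 hplam 0)]
  have hshift : ∀ k : ℕ, (1 - (ν : ℝ)⁻¹) * cc p (p * lam) (0 + (k + 1)) * ((ν : ℝ) ^ (0 + (k + 1)))⁻¹
      = ((ν : ℝ) * p)⁻¹ * ((1 - (ν : ℝ)⁻¹) * cc p lam (0 + k) * ((ν : ℝ) ^ (0 + k))⁻¹) := by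
    intro k
    simp only [zero_add]
    have e1 : p * lam + p ^ (k + 1) = p * (lam + p ^ k) := by rw [pow_succ]; ring
    rw [cc, cc, e1, mul_inv p (lam + p ^ k), pow_succ (ν : ℝ) k,
      mul_inv ((ν : ℝ) ^ k) (ν : ℝ), mul_inv (ν : ℝ) p]
    ring
  rw [tsum_congr hshift, tsum_mul_left]
  have ht0 : (1 - (ν : ℝ)⁻¹) * cc p (p * lam) (0 + 0) * ((ν : ℝ) ^ (0 + 0))⁻¹
      = ((ν : ℝ) * p)⁻¹ * ((1 - (ν : ℝ)⁻¹) * (ν : ℝ) * (lam + p⁻¹)⁻¹) := by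
    simp only [zero_add, pow_zero, inv_one, mul_one, Nat.add_zero]
    have e1 : p * lam + p ^ 0 = p * (lam + p⁻¹) := by
      rw [pow_zero, mul_add, mul_inv_cancel₀ hp0']
    rw [cc, e1, mul_inv]
    field_simp
  rw [ht0, show bet ν p lam 0 = ∑' k : ℕ,
      (1 - (ν : ℝ)⁻¹) * cc p lam (0 + k) * ((ν : ℝ) ^ (0 + k))⁻¹ from rfl]
  ring

theorem Gneg_scale (hν : 2 ≤ ν) (hp0 : 0 < p) (hνp1 : (ν : ℝ) * p < 1) (hlam : 0 < lam) :
    Gneg ν p (p * lam)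
      = ((ν : ℝ) * p)⁻¹ * (Gneg ν p lam
          - (1 - (ν : ℝ)⁻¹) * (ν : ℝ) * (lam + p⁻¹)⁻¹) := by
  have hν0 : (ν : ℝ) ≠ 0 := (nu_real_pos hν).ne'
  have hp0' : p ≠ 0 := hp0.ne'
  have hsplit : Gneg ν p lam
      = (1 - (ν : ℝ)⁻¹) * (ν : ℝ) * (lam + p⁻¹)⁻¹
        + ∑' s : ℕ, (1 - (ν : ℝ)⁻¹) * (ν : ℝ) ^ (s + 1 + 1) * (lam + (p ^ (s + 1 + 1))⁻¹)⁻¹ := by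
    rw [Gneg, Summable.tsum_eq_zero_add (summable_Gneg hν hp0 hνp1 hlam)]
    congr 1
    simp [pow_one]
  have hterm : ∀ s : ℕ,
      (1 - (ν : ℝ)⁻¹) * (ν : ℝ) ^ (s + 1) * (p * lam + (p ^ (s + 1))⁻¹)⁻¹
      = ((ν : ℝ) * p)⁻¹
        * ((1 - (ν : ℝ)⁻¹) * (ν : ℝ) ^ (s + 1 + 1) * (lam + (p ^ (s + 1 + 1))⁻¹)⁻¹) := by
    intro s
    have e1 : p * lam + (p ^ (s + 1))⁻¹ = p * (lam + (p ^ (s + 2))⁻¹) := by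
      have hps : p ^ (s + 2) = p ^ (s + 1) * p := pow_succ p (s + 1)
      have : (p ^ (s + 1))⁻¹ = p * (p ^ (s + 2))⁻¹ := by
        rw [hps, mul_inv]
        field_simp
      rw [this]; ring
    rw [e1, mul_inv, mul_inv]
    have h2 : (ν : ℝ) ^ (s + 1 + 1) = (ν : ℝ) * (ν : ℝ) ^ (s + 1) := by
      rw [pow_succ]; ring
    rw [show s + 1 + 1 = s + 2 by omega] at h2 ⊢
    rw [h2]
    field_simp
  rw [show Gneg ν p (p * lam) = ∑' s : ℕ,
      (1 - (ν : ℝ)⁻¹) * (ν : ℝ) ^ (s + 1) * (p * lam + (p ^ (s + 1))⁻¹)⁻¹ from rfl,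
    tsum_congr hterm, tsum_mul_left]
  rw [show (∑' s : ℕ, (1 - (ν : ℝ)⁻¹) * (ν : ℝ) ^ (s + 2) * (lam + (p ^ (s + 2))⁻¹)⁻¹)
      = Gneg ν p lam - (1 - (ν : ℝ)⁻¹) * (ν : ℝ) * (lam + p⁻¹)⁻¹ from by
    rw [hsplit]
    simp only [show ∀ s : ℕ, s + 1 + 1 = s + 2 from fun s => rfl]
    ring]

theorem Gfun_scale (hν : 2 ≤ ν) (hp0 : 0 < p) (hνp1 : (ν : ℝ) * p < 1) (hlam : 0 < lam) :
    Gfun ν p (p * lam) = ((ν : ℝ) * p)⁻¹ * Gfun ν p lam := by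
  rw [Gfun, Gfun, bet0_scale hν hp0 hlam, Gneg_scale hν hp0 hνp1 hlam]
  ring

/-- the periodic amplitude -/
def ufun (ν : ℕ) (p α : ℝ) (z : ℝ) : ℝ := (p ^ z) ^ α * Gfun ν p (p ^ z)

theorem ufun_pos (hν : 2 ≤ ν) (hp0 : 0 < p) (α z : ℝ) : 0 < ufun ν p α z := by
  have hpz : (0:ℝ) < p ^ z := Real.rpow_pos_of_pos hp0 z
  exact mul_pos (Real.rpow_pos_of_pos hpz α) (Gfun_pos hν hp0 hpz)

theorem rpow_alpha (hν : 2 ≤ ν) (hp0 : 0 < p) {α : ℝ}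
    (hα : α * Real.log p = Real.log ((ν : ℝ) * p)) :
    p ^ α = (ν : ℝ) * p := by
  have hνp : (0:ℝ) < (ν : ℝ) * p := mul_pos (nu_real_pos hν) hp0
  rw [Real.rpow_def_of_pos hp0, mul_comm (Real.log p) α, hα, Real.exp_log hνp]

theorem ufun_periodic (hν : 2 ≤ ν) (hp0 : 0 < p) (hνp1 : (ν : ℝ) * p < 1) {α : ℝ}
    (hα : α * Real.log p = Real.log ((ν : ℝ) * p)) (z : ℝ) :
    ufun ν p α (z + 1) = ufun ν p α z := by
  have hpz : (0:ℝ) < p ^ z := Real.rpow_pos_of_pos hp0 z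
  have hνp : (0:ℝ) < (ν : ℝ) * p := mul_pos (nu_real_pos hν) hp0
  have h1 : p ^ (z + 1) = p * p ^ z := by
    rw [Real.rpow_add hp0, Real.rpow_one]; ring
  rw [ufun, ufun, h1, Gfun_scale hν hp0 hνp1 hpz,
    Real.mul_rpow hp0.le hpz.le, rpow_alpha hν hp0 hα]
  have hcancel : ((ν : ℝ) * p) * ((ν : ℝ) * p)⁻¹ = 1 := mul_inv_cancel₀ hνp.ne'
  calc ((ν : ℝ) * p) * (p ^ z) ^ α * (((ν : ℝ) * p)⁻¹ * Gfun ν p (p ^ z))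
      = (((ν : ℝ) * p) * ((ν : ℝ) * p)⁻¹) * ((p ^ z) ^ α * Gfun ν p (p ^ z)) := by ring
    _ = (p ^ z) ^ α * Gfun ν p (p ^ z) := by rw [hcancel, one_mul]

theorem lam_rpow_ufun (hp0 : 0 < p) (hp1 : p < 1) (hlam : 0 < lam) (ν : ℕ) (α : ℝ) :
    lam ^ (-α) * ufun ν p α (Real.log lam / Real.log p) = Gfun ν p lam := by
  have hlogp : Real.log p ≠ 0 := (Real.log_neg hp0 hp1).ne
  have hpz : p ^ (Real.log lam / Real.log p) = lam := by
    rw [Real.rpow_def_of_pos hp0, mul_comm, div_mul_cancel₀ _ hlogp, Real.exp_log hlam]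
  rw [ufun, hpz, ← mul_assoc, ← Real.rpow_add hlam, neg_add_cancel, Real.rpow_zero, one_mul]

end SC
end HAux

theorem stmt11 (ν : ℕ) (hν : 2 ≤ ν) (p : ℝ) (hp0 : 0 < p) (hp1 : p < 1)
    (hrec : sh ν p < 2)
    (Δ : Hl2 ν →L[ℝ] Hl2 ν) (hΔ : IsHierLap ν p Δ) :
    0 < 1 - sh ν p / 2 ∧ 1 - sh ν p / 2 < 1 ∧
    ∃ u : ℝ → ℝ, (∀ z, 0 < u z) ∧ (∀ z, u (z + 1) = u z) ∧
      ∃ C : ℝ, 0 < C ∧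
        ∀ x : HX ν, ∀ lam : ℝ, 0 < lam → lam < 1 →
          |resolvK ν Δ lam x x -
              lam ^ (-(1 - sh ν p / 2)) * u (Real.log lam / Real.log p) -
              p * (ν - 1) / (p * ν - 1)| ≤ C * lam := by
  haveI : NeZero ν := ⟨by omega⟩
  have hν2R : (2:ℝ) ≤ (ν : ℝ) := by exact_mod_cast hν
  have hν0 : (ν : ℝ) ≠ 0 := by linarith
  have hlogν : 0 < Real.log ν := Real.log_pos (by linarith)
  have hlogp : Real.log p < 0 := Real.log_neg hp0 hp1
  have hL : Real.log (1 / p) = -Real.log p := by rw [one_div, Real.log_inv]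
  have hLpos : 0 < Real.log (1 / p) := by rw [hL]; linarith
  have hsh_pos : 0 < sh ν p := by rw [sh]; positivity
  have hα0 : 0 < 1 - sh ν p / 2 := by linarith
  have hα1 : 1 - sh ν p / 2 < 1 := by linarith
  have hlogcmp : Real.log ν < Real.log (1 / p) := by
    have h := hrec
    rw [sh, div_lt_iff₀ hLpos] at h
    linarith
  have hνp1 : (ν : ℝ) * p < 1 := by
    have hlogmul : Real.log ((ν : ℝ) * p) < 0 := by
      rw [Real.log_mul hν0 hp0.ne']
      rw [hL] at hlogcmp
      linarith
    have hνppos : (0:ℝ) < (ν : ℝ) * p := mul_pos (by linarith) hp0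
    exact (Real.log_neg_iff hνppos).1 hlogmul
  have hα : (1 - sh ν p / 2) * Real.log p = Real.log ((ν : ℝ) * p) := by
    have hlogp0 : Real.log p ≠ 0 := hlogp.ne
    rw [sh, hL, Real.log_mul hν0 hp0.ne']
    field_simp
    ring
  refine ⟨hα0, hα1, HAux.ufun ν p (1 - sh ν p / 2),
    fun z => HAux.ufun_pos hν hp0 _ z,
    fun z => HAux.ufun_periodic hν hp0 hνp1 hα z,
    (1 - (ν : ℝ)⁻¹) * ((ν : ℝ) * p ^ 2) / (1 - (ν : ℝ) * p ^ 2), ?_, ?_⟩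
  · have hνp2 : (ν : ℝ) * p ^ 2 < 1 := by nlinarith
    have h1 : 0 < 1 - (ν : ℝ)⁻¹ := HAux.one_sub_nu_inv_pos hν
    have h2 : (0:ℝ) < (ν : ℝ) * p ^ 2 := by positivity
    exact div_pos (mul_pos h1 h2) (by linarith)
  · intro x lam hlam0 hlam1
    have hRK : resolvK ν Δ lam x x = HAux.bet ν p lam 0 := by
      unfold resolvK
      rw [HAux.resolv_eq hν hp0 hp1 hlam0 Δ hΔ x, HAux.inner_delta_right,
        HAux.glp_apply, HAux.hdist_self]
      simp [HAux.ff]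
    rw [hRK, HAux.lam_rpow_ufun hp0 hp1 hlam0 ν _]
    have hgneg := HAux.Gneg_close hν hp0 hp1 hνp1 hlam0
    have hc0 : p * ((ν : ℝ) - 1) / (p * (ν : ℝ) - 1)
        = -(p * ((ν : ℝ) - 1) / (1 - p * (ν : ℝ))) := by
      rw [show p * (ν : ℝ) - 1 = -(1 - p * (ν : ℝ)) by ring, div_neg]
    have hval : HAux.bet ν p lam 0 - HAux.Gfun ν p lam - p * ((ν : ℝ) - 1) / (p * (ν : ℝ) - 1)
        = -(HAux.Gneg ν p lam - p * ((ν : ℝ) - 1) / (1 - p * (ν : ℝ))) := by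
      rw [hc0, HAux.Gfun]
      ring
    rw [hval, abs_neg]
    exact hgneg
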